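/- Let a, b, λ, μ, α, β, r be real numbers with b > 0, λ > 0, μ > 0, α > 0, β > 0, r > 0, and let ψ(z) = a z + (1/2) b² z² + λ z/(α − z) − μ z/(β + z). If ρ₁ < −β < ρ₂ < 0 < ρ₃ < α < ρ₄ are the four real roots of ψ(z) = r, then ψ'(ρ₁) < 0, ψ'(ρ₂) < 0, ψ'(ρ₃) > 0 and ψ'(ρ₄) > 0. -/

import Mathlib

open Filter Topology

lemma cubic_zero (e3 e2 e1 e0 x1 x2 x3 x4 : ℝ)
    (h12 : x1 ≠ x2) (h13 : x1 ≠ x3) (h14 : x1 ≠ x4)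
    (h23 : x2 ≠ x3) (h24 : x2 ≠ x4) (h34 : x3 ≠ x4)
    (H1 : e3*x1^3 + e2*x1^2 + e1*x1 + e0 = 0)
    (H2 : e3*x2^3 + e2*x2^2 + e1*x2 + e0 = 0)
    (H3 : e3*x3^3 + e2*x3^2 + e1*x3 + e0 = 0)
    (H4 : e3*x4^3 + e2*x4^2 + e1*x4 + e0 = 0) :
    e3 = 0 ∧ e2 = 0 ∧ e1 = 0 ∧ e0 = 0 := by
  have d12 : x1 - x2 ≠ 0 := sub_ne_zero.mpr h12
  have d13 : x1 - x3 ≠ 0 := sub_ne_zero.mpr h13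
  have d14 : x1 - x4 ≠ 0 := sub_ne_zero.mpr h14
  have d23 : x2 - x3 ≠ 0 := sub_ne_zero.mpr h23
  have d24 : x2 - x4 ≠ 0 := sub_ne_zero.mpr h24
  have d34 : x3 - x4 ≠ 0 := sub_ne_zero.mpr h34
  have G12 : e3*(x1^2+x1*x2+x2^2) + e2*(x1+x2) + e1 = 0 := by
    apply mul_left_cancel₀ d12
    linear_combination H1 - H2
  have G13 : e3*(x1^2+x1*x3+x3^2) + e2*(x1+x3) + e1 = 0 := by
    apply mul_left_cancel₀ d13
    linear_combination H1 - H3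
  have G14 : e3*(x1^2+x1*x4+x4^2) + e2*(x1+x4) + e1 = 0 := by
    apply mul_left_cancel₀ d14
    linear_combination H1 - H4
  have K3 : e3*(x1+x2+x3) + e2 = 0 := by
    apply mul_left_cancel₀ d23
    linear_combination G12 - G13
  have K4 : e3*(x1+x2+x4) + e2 = 0 := by
    apply mul_left_cancel₀ d24
    linear_combination G12 - G14
  have he3 : e3 = 0 := by
    apply mul_left_cancel₀ d34
    linear_combination K3 - K4
  have he2 : e2 = 0 := by linear_combination K3 - (x1+x2+x3)*he3
  have he1 : e1 = 0 := by
    linear_combination G12 - (x1^2+x1*x2+x2^2)*he3 - (x1+x2)*he2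
  have he0 : e0 = 0 := by
    linear_combination H1 - x1^3*he3 - x1^2*he2 - x1*he1
  exact ⟨he3, he2, he1, he0⟩

lemma deriv_psi_eq (a b lam mu alpha beta : ℝ) (psi : ℝ → ℝ)
    (hpsi : ∀ z : ℝ, z ≠ alpha → z ≠ -beta →
      psi z = a * z + (1/2) * b^2 * z^2 + lam * z / (alpha - z) - mu * z / (beta + z))
    (ρ : ℝ) (h1 : ρ ≠ alpha) (h2 : ρ ≠ -beta) :
    deriv psi ρ = a + b^2*ρ + lam*alpha/(alpha-ρ)^2 - mu*beta/(beta+ρ)^2 := by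
  have hd1 : alpha - ρ ≠ 0 := sub_ne_zero.mpr (Ne.symm h1)
  have hd2 : beta + ρ ≠ 0 := fun h => h2 (by linarith)
  have heq : psi =ᶠ[nhds ρ] fun z => a * z + (1/2) * b^2 * z^2 + lam * z / (alpha - z) - mu * z / (beta + z) := by
    filter_upwards [eventually_ne_nhds h1, eventually_ne_nhds h2] with z hz1 hz2
    exact hpsi z hz1 hz2
  rw [heq.deriv_eq]
  have hA : HasDerivAt (fun z : ℝ => a * z + (1/2) * b^2 * z^2) (a + b^2*ρ) ρ := by
    have h := ((hasDerivAt_id ρ).const_mul a).add ((hasDerivAt_pow 2 ρ).const_mul ((1/2)*b^2))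
    refine h.congr_deriv ?_
    push_cast
    ring
  have hB : HasDerivAt (fun z : ℝ => lam * z / (alpha - z))
      ((lam * (alpha - ρ) - lam * ρ * (-1)) / (alpha - ρ)^2) ρ := by
    have hnum : HasDerivAt (fun z : ℝ => lam * z) lam ρ := by
      simpa using (hasDerivAt_id ρ).const_mul lam
    have hden : HasDerivAt (fun z : ℝ => alpha - z) (-1) ρ := by
      simpa using (hasDerivAt_id ρ).const_sub alpha
    exact hnum.div hden hd1
  have hC : HasDerivAt (fun z : ℝ => mu * z / (beta + z))
      ((mu * (beta + ρ) - mu * ρ * 1) / (beta + ρ)^2) ρ := by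
    have hnum : HasDerivAt (fun z : ℝ => mu * z) mu ρ := by
      simpa using (hasDerivAt_id ρ).const_mul mu
    have hden : HasDerivAt (fun z : ℝ => beta + z) 1 ρ := by
      simpa using (hasDerivAt_id ρ).const_add beta
    exact hnum.div hden hd2
  have h := (hA.add hB).sub hC
  rw [show deriv (fun z : ℝ => a * z + (1/2) * b^2 * z^2 + lam * z / (alpha - z) - mu * z / (beta + z)) ρ = _ from h.deriv]
  field_simp
  ring

set_option maxHeartbeats 1000000 in
theorem deriv_signs_at_roots
    (a b lam mu alpha beta r : ℝ)
    (hb : 0 < b) (hlam : 0 < lam) (hmu : 0 < mu)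
    (halpha : 0 < alpha) (hbeta : 0 < beta) (hr : 0 < r)
    (psi : ℝ → ℝ)
    (hpsi : ∀ z : ℝ, z ≠ alpha → z ≠ -beta →
      psi z = a * z + (1/2) * b^2 * z^2 + lam * z / (alpha - z) - mu * z / (beta + z))
    (ρ₁ ρ₂ ρ₃ ρ₄ : ℝ)
    (hord : ρ₁ < -beta ∧ -beta < ρ₂ ∧ ρ₂ < 0 ∧ 0 < ρ₃ ∧ ρ₃ < alpha ∧ alpha < ρ₄)
    (hroot₁ : psi ρ₁ = r) (hroot₂ : psi ρ₂ = r)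
    (hroot₃ : psi ρ₃ = r) (hroot₄ : psi ρ₄ = r) :
    deriv psi ρ₁ < 0 ∧ deriv psi ρ₂ < 0 ∧ 0 < deriv psi ρ₃ ∧ 0 < deriv psi ρ₄ := by
  obtain ⟨o1, o2, o3, o4, o5, o6⟩ := hord
  -- basic distinctness and nonvanishing facts
  have hne1a : ρ₁ ≠ alpha := ne_of_lt (by linarith)
  have hne1b : ρ₁ ≠ -beta := ne_of_lt o1
  have hne2a : ρ₂ ≠ alpha := ne_of_lt (by linarith)
  have hne2b : ρ₂ ≠ -beta := (ne_of_lt o2).symm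
  have hne3a : ρ₃ ≠ alpha := ne_of_lt o5
  have hne3b : ρ₃ ≠ -beta := by intro h; rw [h] at o4; linarith
  have hne4a : ρ₄ ≠ alpha := (ne_of_lt o6).symm
  have hne4b : ρ₄ ≠ -beta := by intro h; rw [h] at o6; linarith
  -- polynomial equations from the root conditions
  have E : ∀ ρ : ℝ, ρ ≠ alpha → ρ ≠ -beta → psi ρ = r →
      (a*ρ + (1/2)*b^2*ρ^2 - r)*(alpha-ρ)*(beta+ρ) + lam*ρ*(beta+ρ) - mu*ρ*(alpha-ρ) = 0 := by
    intro ρ h1 h2 hroot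
    have hd1 : alpha - ρ ≠ 0 := sub_ne_zero.mpr (Ne.symm h1)
    have hd2 : beta + ρ ≠ 0 := fun h => h2 (by linarith)
    have h := hpsi ρ h1 h2
    rw [hroot] at h
    field_simp at h
    linear_combination (-1/2)*h
  have E1 := E ρ₁ hne1a hne1b hroot₁
  have E2 := E ρ₂ hne2a hne2b hroot₂
  have E3 := E ρ₃ hne3a hne3b hroot₃
  have E4 := E ρ₄ hne4a hne4b hroot₄
  have hd12 : ρ₁ ≠ ρ₂ := ne_of_lt (by linarith)
  have hd13 : ρ₁ ≠ ρ₃ := ne_of_lt (by linarith)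
  have hd14 : ρ₁ ≠ ρ₄ := ne_of_lt (by linarith)
  have hd23 : ρ₂ ≠ ρ₃ := ne_of_lt (by linarith)
  have hd24 : ρ₂ ≠ ρ₄ := ne_of_lt (by linarith)
  have hd34 : ρ₃ ≠ ρ₄ := ne_of_lt (by linarith)
  obtain ⟨Z3, Z2, Z1, Z0⟩ :=
    cubic_zero (-a + (1/2)*b^2*(alpha-beta) - (1/2)*b^2*(ρ₁+ρ₂+ρ₃+ρ₄))
      (a*(alpha-beta) + (1/2)*b^2*alpha*beta + r + lam + mu
        + (1/2)*b^2*(ρ₁*ρ₂+ρ₁*ρ₃+ρ₁*ρ₄+ρ₂*ρ₃+ρ₂*ρ₄+ρ₃*ρ₄))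
      (a*alpha*beta - r*(alpha-beta) + lam*beta - mu*alpha
        - (1/2)*b^2*(ρ₁*ρ₂*ρ₃+ρ₁*ρ₂*ρ₄+ρ₁*ρ₃*ρ₄+ρ₂*ρ₃*ρ₄))
      (-r*alpha*beta + (1/2)*b^2*(ρ₁*ρ₂*ρ₃*ρ₄))
      ρ₁ ρ₂ ρ₃ ρ₄ hd12 hd13 hd14 hd23 hd24 hd34
      (by linear_combination E1) (by linear_combination E2)
      (by linear_combination E3) (by linear_combination E4)
  -- the key polynomial identity for the derivative at each root
  have hD1 : (a + b^2*ρ₁)*((alpha-ρ₁)^2*(beta+ρ₁)^2) + lam*alpha*(beta+ρ₁)^2 - mu*beta*(alpha-ρ₁)^2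
      = -(1/2)*b^2*(ρ₁-ρ₂)*(ρ₁-ρ₃)*(ρ₁-ρ₄)*((alpha-ρ₁)*(beta+ρ₁)) := by
    linear_combination (3*ρ₁^2*((alpha-ρ₁)*(beta+ρ₁)) - ρ₁^3*(alpha-beta-2*ρ₁))*Z3
      + (2*ρ₁*((alpha-ρ₁)*(beta+ρ₁)) - ρ₁^2*(alpha-beta-2*ρ₁))*Z2
      + (((alpha-ρ₁)*(beta+ρ₁)) - ρ₁*(alpha-beta-2*ρ₁))*Z1
      + (-(alpha-beta-2*ρ₁))*Z0
  have hD2 : (a + b^2*ρ₂)*((alpha-ρ₂)^2*(beta+ρ₂)^2) + lam*alpha*(beta+ρ₂)^2 - mu*beta*(alpha-ρ₂)^2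
      = -(1/2)*b^2*(ρ₂-ρ₁)*(ρ₂-ρ₃)*(ρ₂-ρ₄)*((alpha-ρ₂)*(beta+ρ₂)) := by
    linear_combination (3*ρ₂^2*((alpha-ρ₂)*(beta+ρ₂)) - ρ₂^3*(alpha-beta-2*ρ₂))*Z3
      + (2*ρ₂*((alpha-ρ₂)*(beta+ρ₂)) - ρ₂^2*(alpha-beta-2*ρ₂))*Z2
      + (((alpha-ρ₂)*(beta+ρ₂)) - ρ₂*(alpha-beta-2*ρ₂))*Z1
      + (-(alpha-beta-2*ρ₂))*Z0
  have hD3 : (a + b^2*ρ₃)*((alpha-ρ₃)^2*(beta+ρ₃)^2) + lam*alpha*(beta+ρ₃)^2 - mu*beta*(alpha-ρ₃)^2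
      = -(1/2)*b^2*(ρ₃-ρ₁)*(ρ₃-ρ₂)*(ρ₃-ρ₄)*((alpha-ρ₃)*(beta+ρ₃)) := by
    linear_combination (3*ρ₃^2*((alpha-ρ₃)*(beta+ρ₃)) - ρ₃^3*(alpha-beta-2*ρ₃))*Z3
      + (2*ρ₃*((alpha-ρ₃)*(beta+ρ₃)) - ρ₃^2*(alpha-beta-2*ρ₃))*Z2
      + (((alpha-ρ₃)*(beta+ρ₃)) - ρ₃*(alpha-beta-2*ρ₃))*Z1
      + (-(alpha-beta-2*ρ₃))*Z0
  have hD4 : (a + b^2*ρ₄)*((alpha-ρ₄)^2*(beta+ρ₄)^2) + lam*alpha*(beta+ρ₄)^2 - mu*beta*(alpha-ρ₄)^2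
      = -(1/2)*b^2*(ρ₄-ρ₁)*(ρ₄-ρ₂)*(ρ₄-ρ₃)*((alpha-ρ₄)*(beta+ρ₄)) := by
    linear_combination (3*ρ₄^2*((alpha-ρ₄)*(beta+ρ₄)) - ρ₄^3*(alpha-beta-2*ρ₄))*Z3
      + (2*ρ₄*((alpha-ρ₄)*(beta+ρ₄)) - ρ₄^2*(alpha-beta-2*ρ₄))*Z2
      + (((alpha-ρ₄)*(beta+ρ₄)) - ρ₄*(alpha-beta-2*ρ₄))*Z1
      + (-(alpha-beta-2*ρ₄))*Z0
  have hb2 : (0:ℝ) < (1/2)*b^2 := by positivity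
  -- conclude signs
  refine ⟨?_, ?_, ?_, ?_⟩
  · rw [deriv_psi_eq a b lam mu alpha beta psi hpsi ρ₁ hne1a hne1b]
    have hden1 : alpha - ρ₁ ≠ 0 := sub_ne_zero.mpr (Ne.symm hne1a)
    have hden2 : beta + ρ₁ ≠ 0 := fun h => hne1b (by linarith)
    have hpos : 0 < (alpha-ρ₁)^2*(beta+ρ₁)^2 := by positivity
    have hDexp : (a + b^2*ρ₁ + lam*alpha/(alpha-ρ₁)^2 - mu*beta/(beta+ρ₁)^2)
        * ((alpha-ρ₁)^2*(beta+ρ₁)^2)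
        = -(1/2)*b^2*(ρ₁-ρ₂)*(ρ₁-ρ₃)*(ρ₁-ρ₄)*((alpha-ρ₁)*(beta+ρ₁)) := by
      rw [← hD1]; field_simp
    have hsign : 0 < (1/2)*b^2*((ρ₂-ρ₁)*((ρ₃-ρ₁)*((ρ₄-ρ₁)*((alpha-ρ₁)*(-(beta+ρ₁)))))) := by
      apply mul_pos hb2
      apply mul_pos (by linarith)
      apply mul_pos (by linarith)
      apply mul_pos (by linarith)
      exact mul_pos (by linarith) (by linarith)
    have hrw : -(1/2)*b^2*(ρ₁-ρ₂)*(ρ₁-ρ₃)*(ρ₁-ρ₄)*((alpha-ρ₁)*(beta+ρ₁)) = -((1/2)*b^2*((ρ₂-ρ₁)*((ρ₃-ρ₁)*((ρ₄-ρ₁)*((alpha-ρ₁)*(-(beta+ρ₁))))))) := by ring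
    have hneg : (a + b^2*ρ₁ + lam*alpha/(alpha-ρ₁)^2 - mu*beta/(beta+ρ₁)^2)
        * ((alpha-ρ₁)^2*(beta+ρ₁)^2) < 0 := by
      rw [hDexp, hrw]; exact neg_lt_zero.mpr hsign
    by_contra hcon
    push_neg at hcon
    exact absurd (mul_nonneg hcon hpos.le) (not_le.mpr hneg)
  · rw [deriv_psi_eq a b lam mu alpha beta psi hpsi ρ₂ hne2a hne2b]
    have hden1 : alpha - ρ₂ ≠ 0 := sub_ne_zero.mpr (Ne.symm hne2a)
    have hden2 : beta + ρ₂ ≠ 0 := fun h => hne2b (by linarith)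
    have hpos : 0 < (alpha-ρ₂)^2*(beta+ρ₂)^2 := by positivity
    have hDexp : (a + b^2*ρ₂ + lam*alpha/(alpha-ρ₂)^2 - mu*beta/(beta+ρ₂)^2)
        * ((alpha-ρ₂)^2*(beta+ρ₂)^2)
        = -(1/2)*b^2*(ρ₂-ρ₁)*(ρ₂-ρ₃)*(ρ₂-ρ₄)*((alpha-ρ₂)*(beta+ρ₂)) := by
      rw [← hD2]; field_simp
    have hsign : 0 < (1/2)*b^2*((ρ₂-ρ₁)*((ρ₃-ρ₂)*((ρ₄-ρ₂)*((alpha-ρ₂)*(beta+ρ₂))))) := by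
      apply mul_pos hb2
      apply mul_pos (by linarith)
      apply mul_pos (by linarith)
      apply mul_pos (by linarith)
      exact mul_pos (by linarith) (by linarith)
    have hrw : -(1/2)*b^2*(ρ₂-ρ₁)*(ρ₂-ρ₃)*(ρ₂-ρ₄)*((alpha-ρ₂)*(beta+ρ₂)) = -((1/2)*b^2*((ρ₂-ρ₁)*((ρ₃-ρ₂)*((ρ₄-ρ₂)*((alpha-ρ₂)*(beta+ρ₂)))))) := by ring
    have hneg : (a + b^2*ρ₂ + lam*alpha/(alpha-ρ₂)^2 - mu*beta/(beta+ρ₂)^2)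
        * ((alpha-ρ₂)^2*(beta+ρ₂)^2) < 0 := by
      rw [hDexp, hrw]; exact neg_lt_zero.mpr hsign
    by_contra hcon
    push_neg at hcon
    exact absurd (mul_nonneg hcon hpos.le) (not_le.mpr hneg)
  · rw [deriv_psi_eq a b lam mu alpha beta psi hpsi ρ₃ hne3a hne3b]
    have hden1 : alpha - ρ₃ ≠ 0 := sub_ne_zero.mpr (Ne.symm hne3a)
    have hden2 : beta + ρ₃ ≠ 0 := fun h => hne3b (by linarith)
    have hpos : 0 < (alpha-ρ₃)^2*(beta+ρ₃)^2 := by positivity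
    have hDexp : (a + b^2*ρ₃ + lam*alpha/(alpha-ρ₃)^2 - mu*beta/(beta+ρ₃)^2)
        * ((alpha-ρ₃)^2*(beta+ρ₃)^2)
        = -(1/2)*b^2*(ρ₃-ρ₁)*(ρ₃-ρ₂)*(ρ₃-ρ₄)*((alpha-ρ₃)*(beta+ρ₃)) := by
      rw [← hD3]; field_simp
    have hsign : 0 < (1/2)*b^2*((ρ₃-ρ₁)*((ρ₃-ρ₂)*((ρ₄-ρ₃)*((alpha-ρ₃)*(beta+ρ₃))))) := by
      apply mul_pos hb2
      apply mul_pos (by linarith)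
      apply mul_pos (by linarith)
      apply mul_pos (by linarith)
      exact mul_pos (by linarith) (by linarith)
    have hrw : -(1/2)*b^2*(ρ₃-ρ₁)*(ρ₃-ρ₂)*(ρ₃-ρ₄)*((alpha-ρ₃)*(beta+ρ₃)) = (1/2)*b^2*((ρ₃-ρ₁)*((ρ₃-ρ₂)*((ρ₄-ρ₃)*((alpha-ρ₃)*(beta+ρ₃))))) := by ring
    have hneg : 0 < (a + b^2*ρ₃ + lam*alpha/(alpha-ρ₃)^2 - mu*beta/(beta+ρ₃)^2)
        * ((alpha-ρ₃)^2*(beta+ρ₃)^2) := by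
      rw [hDexp, hrw]; exact hsign
    by_contra hcon
    push_neg at hcon
    exact absurd (mul_nonpos_of_nonpos_of_nonneg hcon hpos.le) (not_le.mpr hneg)
  · rw [deriv_psi_eq a b lam mu alpha beta psi hpsi ρ₄ hne4a hne4b]
    have hden1 : alpha - ρ₄ ≠ 0 := sub_ne_zero.mpr (Ne.symm hne4a)
    have hden2 : beta + ρ₄ ≠ 0 := fun h => hne4b (by linarith)
    have hpos : 0 < (alpha-ρ₄)^2*(beta+ρ₄)^2 := by positivity
    have hDexp : (a + b^2*ρ₄ + lam*alpha/(alpha-ρ₄)^2 - mu*beta/(beta+ρ₄)^2)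
        * ((alpha-ρ₄)^2*(beta+ρ₄)^2)
        = -(1/2)*b^2*(ρ₄-ρ₁)*(ρ₄-ρ₂)*(ρ₄-ρ₃)*((alpha-ρ₄)*(beta+ρ₄)) := by
      rw [← hD4]; field_simp
    have hsign : 0 < (1/2)*b^2*((ρ₄-ρ₁)*((ρ₄-ρ₂)*((ρ₄-ρ₃)*((-(alpha-ρ₄))*(beta+ρ₄))))) := by
      apply mul_pos hb2
      apply mul_pos (by linarith)
      apply mul_pos (by linarith)
      apply mul_pos (by linarith)
      exact mul_pos (by linarith) (by linarith)
    have hrw : -(1/2)*b^2*(ρ₄-ρ₁)*(ρ₄-ρ₂)*(ρ₄-ρ₃)*((alpha-ρ₄)*(beta+ρ₄)) = (1/2)*b^2*((ρ₄-ρ₁)*((ρ₄-ρ₂)*((ρ₄-ρ₃)*((-(alpha-ρ₄))*(beta+ρ₄))))) := by ring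
    have hneg : 0 < (a + b^2*ρ₄ + lam*alpha/(alpha-ρ₄)^2 - mu*beta/(beta+ρ₄)^2)
        * ((alpha-ρ₄)^2*(beta+ρ₄)^2) := by
      rw [hDexp, hrw]; exact hsign
    by_contra hcon
    push_neg at hcon
    exact absurd (mul_nonpos_of_nonpos_of_nonneg hcon hpos.le) (not_le.mpr hneg)
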